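/- Let H be a Hopf algebra and B_H the generic base algebra for the trivial cocycle. Then S(t_H)_Θ is generated as a B_H-module by the elements t_x, x ∈ H. In particular, each product t_x t_y and each inverse t⁻¹_x lies in the B_H-submodule spanned by the t_z. -/

import Mathlib

set_option maxHeartbeats 1000000
set_option synthInstance.maxHeartbeats 400000


open TensorProduct

noncomputable section

variable (k : Type) [Field k]

/-- Convolution product of two linear maps from a coalgebra to an algebra. -/
def conv {C A : Type} [AddCommGroup C] [Module k C] [Coalgebra k C]
    [Ring A] [Algebra k A] (f g : C →ₗ[k] A) : C →ₗ[k] A :=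
  LinearMap.mul' k A ∘ₗ TensorProduct.map f g ∘ₗ Coalgebra.comul

/-- Unit of the convolution algebra: `unit ∘ counit`. -/
def convOne {C A : Type} [AddCommGroup C] [Module k C] [Coalgebra k C]
    [Ring A] [Algebra k A] : C →ₗ[k] A :=
  Algebra.linearMap k A ∘ₗ Coalgebra.counit

section CocycleDefs

variable {H : Type} [Ring H] [HopfAlgebra k H]

/-- The two-cocycle condition `β(x₁,y₁) β(x₂y₂,z) = β(y₁,z₁) β(x,y₂z₂)` for an `A`-valued
bilinear form `β` on `H`, as an equality of linear maps on `(H ⊗ H) ⊗ H`. -/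
def IsCocycle {A : Type} [CommRing A] [Algebra k A] (β : H ⊗[k] H →ₗ[k] A) : Prop :=
  conv k (LinearMap.mul' k A ∘ₗ TensorProduct.map β (convOne k))
      (β ∘ₗ TensorProduct.map (LinearMap.mul' k H) LinearMap.id)
  = conv k
      (LinearMap.mul' k A ∘ₗ TensorProduct.map (convOne k) β
        ∘ₗ (TensorProduct.assoc k H H H).toLinearMap)
      (β ∘ₗ TensorProduct.map LinearMap.id (LinearMap.mul' k H)
        ∘ₗ (TensorProduct.assoc k H H H).toLinearMap)

/-- `β` and `βinv` are mutually inverse for the convolution product. -/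
def IsConvInverse {A : Type} [CommRing A] [Algebra k A]
    (β βinv : H ⊗[k] H →ₗ[k] A) : Prop :=
  conv k β βinv = convOne k ∧ conv k βinv β = convOne k

end CocycleDefs

variable (C : Type) [AddCommGroup C] [Module k C] [Coalgebra k C]

/-- A model of Takeuchi's free commutative Hopf algebra `S(t_C)_Θ` generated by the
coalgebra `C`, together with its generators `t_x` and `t⁻¹_x`. -/
structure TakData (T : Type) [CommRing T] [HopfAlgebra k T] where
  t : C →ₗ[k] T
  tinv : C →ₗ[k] T
  comul_t : Coalgebra.comul ∘ₗ t = TensorProduct.map t t ∘ₗ Coalgebra.comul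
  counit_t : Coalgebra.counit ∘ₗ t = Coalgebra.counit
  comul_tinv : Coalgebra.comul ∘ₗ tinv
    = TensorProduct.map tinv tinv ∘ₗ (TensorProduct.comm k C C).toLinearMap ∘ₗ Coalgebra.comul
  counit_tinv : Coalgebra.counit ∘ₗ tinv = Coalgebra.counit
  conv_t_tinv : conv k t tinv = convOne k
  conv_tinv_t : conv k tinv t = convOne k
  antipode_t : HopfAlgebra.antipode (R := k) ∘ₗ t = tinv
  antipode_tinv : HopfAlgebra.antipode (R := k) ∘ₗ tinv = t
  adjoin_eq_top : Algebra.adjoin k (Set.range ⇑t ∪ Set.range ⇑tinv) = ⊤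

namespace TakData

variable {k C} {H : Type} [Ring H] [HopfAlgebra k H]
variable {T : Type} [CommRing T] [HopfAlgebra k T] (D : TakData k H T)

/-- `x ⊗ y ↦ t_x t_y`. -/
def tt : H ⊗[k] H →ₗ[k] T := LinearMap.mul' k T ∘ₗ TensorProduct.map D.t D.t

/-- `x ⊗ y ↦ t⁻¹_{xy}`. -/
def tinvMul : H ⊗[k] H →ₗ[k] T := D.tinv ∘ₗ LinearMap.mul' k H

/-- `x ⊗ y ↦ t_{xy}`. -/
def tMul : H ⊗[k] H →ₗ[k] T := D.t ∘ₗ LinearMap.mul' k H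

/-- `x ⊗ y ↦ t⁻¹_x t⁻¹_y`. -/
def tinvtinv : H ⊗[k] H →ₗ[k] T := LinearMap.mul' k T ∘ₗ TensorProduct.map D.tinv D.tinv

/-- The generic cocycle for the trivial cocycle: `σ(x,y) = t_{x₁} t_{y₁} t⁻¹_{x₂y₂}`. -/
def sigmaEps : H ⊗[k] H →ₗ[k] T := conv k D.tt D.tinvMul

/-- Its convolution inverse: `σ⁻¹(x,y) = t_{x₁y₁} t⁻¹_{x₂} t⁻¹_{y₂}`. -/
def sigmaEpsInv : H ⊗[k] H →ₗ[k] T := conv k D.tMul D.tinvtinv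

/-- The generic cocycle attached to `α`: `σ_α(x,y) = t_{x₁} t_{y₁} α(x₂,y₂) t⁻¹_{x₃y₃}`. -/
def sigma (α : H ⊗[k] H →ₗ[k] k) : H ⊗[k] H →ₗ[k] T :=
  conv k (conv k D.tt (Algebra.linearMap k T ∘ₗ α)) D.tinvMul

/-- The inverse generic cocycle: `σ_α⁻¹(x,y) = t_{x₁y₁} α⁻¹(x₂,y₂) t⁻¹_{x₃} t⁻¹_{y₃}`. -/
def sigmaInv (αinv : H ⊗[k] H →ₗ[k] k) : H ⊗[k] H →ₗ[k] T :=
  conv k (conv k D.tMul (Algebra.linearMap k T ∘ₗ αinv)) D.tinvtinv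

/-- The generic base algebra `B_H^α`: the subalgebra of `S(t_H)_Θ` generated by the values
of the generic cocycle `σ_α` and of its inverse. -/
def genBase (α αinv : H ⊗[k] H →ₗ[k] k) : Subalgebra k T :=
  Algebra.adjoin k
    (Set.range (fun p : H × H => D.sigma α (p.1 ⊗ₜ[k] p.2)) ∪
      Set.range (fun p : H × H => D.sigmaInv αinv (p.1 ⊗ₜ[k] p.2)))

/-- The generic base algebra `B_H` for the trivial cocycle. -/
def B : Subalgebra k T :=
  Algebra.adjoin k
    (Set.range (fun p : H × H => D.sigmaEps (p.1 ⊗ₜ[k] p.2)) ∪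
      Set.range (fun p : H × H => D.sigmaEpsInv (p.1 ⊗ₜ[k] p.2)))

end TakData

section ConvAux

variable {k : Type} [Field k]
variable {C : Type} [AddCommGroup C] [Module k C] [Coalgebra k C]

open Coalgebra LinearMap

section RingA

variable {A : Type} [Ring A] [Algebra k A]

lemma conv_apply' (f g : C →ₗ[k] A) (x : C) :
    conv k f g x = LinearMap.mul' k A (TensorProduct.map f g (Coalgebra.comul x)) := rfl

lemma convOne_apply' (x : C) :
    (convOne k : C →ₗ[k] A) x = algebraMap k A (Coalgebra.counit x) := rfl

lemma conv_convOne (f : C →ₗ[k] A) : conv k f (convOne k) = f := by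
  ext x
  have r := Coalgebra.Repr.arbitrary k x
  have hx : ∑ i ∈ r.index, Coalgebra.counit (R := k) (r.right i) • r.left i = x := by
    have := congrArg (TensorProduct.rid k C) (Coalgebra.sum_tmul_counit_eq r)
    simp only [map_sum, TensorProduct.rid_tmul, one_smul] at this
    exact this
  rw [conv_apply', ← r.eq]
  simp only [map_sum, TensorProduct.map_tmul, LinearMap.mul'_apply, convOne_apply']
  calc ∑ i ∈ r.index, f (r.left i) * algebraMap k A (Coalgebra.counit (r.right i))
      = ∑ i ∈ r.index, f (Coalgebra.counit (R := k) (r.right i) • r.left i) := by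
        refine Finset.sum_congr rfl fun i _ => ?_
        rw [map_smul, ← Algebra.commutes, ← Algebra.smul_def]
    _ = f x := by rw [← map_sum, hx]

lemma convOne_conv (f : C →ₗ[k] A) : conv k (convOne k) f = f := by
  ext x
  have r := Coalgebra.Repr.arbitrary k x
  have hx : ∑ i ∈ r.index, Coalgebra.counit (R := k) (r.left i) • r.right i = x := by
    have := congrArg (TensorProduct.lid k C) (Coalgebra.sum_counit_tmul_eq r)
    simp only [map_sum, TensorProduct.lid_tmul, one_smul] at this
    exact this
  rw [conv_apply', ← r.eq]
  simp only [map_sum, TensorProduct.map_tmul, LinearMap.mul'_apply, convOne_apply']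
  calc ∑ i ∈ r.index, algebraMap k A (Coalgebra.counit (r.left i)) * f (r.right i)
      = ∑ i ∈ r.index, f (Coalgebra.counit (R := k) (r.left i) • r.right i) := by
        refine Finset.sum_congr rfl fun i _ => ?_
        rw [map_smul, ← Algebra.smul_def]
    _ = f x := by rw [← map_sum, hx]

lemma conv_assoc (f g h : C →ₗ[k] A) :
    conv k (conv k f g) h = conv k f (conv k g h) := by
  ext x
  have r := Coalgebra.Repr.arbitrary k x
  have rl : ∀ i : r.ι, Coalgebra.Repr k (r.left i) (C × C) := fun i => Coalgebra.Repr.arbitrary k _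
  have rr : ∀ i : r.ι, Coalgebra.Repr k (r.right i) (C × C) := fun i => Coalgebra.Repr.arbitrary k _
  have key := Coalgebra.sum_map_tmul_tmul_eq f g h x (repr := r) (a₁ := rl) (a₂ := rr)
  have key2 := congrArg (fun z => LinearMap.mul' k A
    ((LinearMap.lTensor A (LinearMap.mul' k A)) z)) key
  simp only [map_sum, LinearMap.lTensor_tmul, LinearMap.mul'_apply] at key2
  have lhs : conv k f (conv k g h) x
      = ∑ i ∈ r.index, ∑ j ∈ (rr i).index,
          f (r.left i) * (g ((rr i).left j) * h ((rr i).right j)) := by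
    rw [conv_apply', ← r.eq, map_sum, map_sum]
    simp only [TensorProduct.map_tmul, LinearMap.mul'_apply]
    refine Finset.sum_congr rfl fun i _ => ?_
    rw [conv_apply', ← (rr i).eq, map_sum, map_sum, Finset.mul_sum]
    simp only [TensorProduct.map_tmul, LinearMap.mul'_apply]
  have rhs : conv k (conv k f g) h x
      = ∑ i ∈ r.index, ∑ j ∈ (rl i).index,
          f ((rl i).left j) * (g ((rl i).right j) * h (r.right i)) := by
    rw [conv_apply', ← r.eq, map_sum, map_sum]
    simp only [TensorProduct.map_tmul, LinearMap.mul'_apply]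
    refine Finset.sum_congr rfl fun i _ => ?_
    rw [conv_apply', ← (rl i).eq, map_sum, map_sum, Finset.sum_mul]
    simp only [TensorProduct.map_tmul, LinearMap.mul'_apply, mul_assoc]
  rw [lhs, rhs, ← key2]

lemma algHom_comp_conv {B : Type} [Ring B] [Algebra k B] (φ : A →ₐ[k] B)
    (f g : C →ₗ[k] A) :
    conv k (φ.toLinearMap ∘ₗ f) (φ.toLinearMap ∘ₗ g) = φ.toLinearMap ∘ₗ conv k f g := by
  ext x
  have r := Coalgebra.Repr.arbitrary k x
  simp only [LinearMap.comp_apply, conv_apply', ← r.eq, map_sum, TensorProduct.map_tmul,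
    LinearMap.mul'_apply, AlgHom.toLinearMap_apply, map_mul]

lemma conv_coalgMap_comp {C' : Type} [AddCommGroup C'] [Module k C'] [Coalgebra k C']
    (φ : C' →ₗ[k] C)
    (hΔ : Coalgebra.comul ∘ₗ φ = TensorProduct.map φ φ ∘ₗ Coalgebra.comul)
    (f g : C →ₗ[k] A) :
    conv k (f ∘ₗ φ) (g ∘ₗ φ) = conv k f g ∘ₗ φ := by
  ext x
  have h1 : Coalgebra.comul (R := k) (φ x) = TensorProduct.map φ φ (Coalgebra.comul x) :=
    congrFun (congrArg DFunLike.coe hΔ) x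
  have r := Coalgebra.Repr.arbitrary k x
  simp only [LinearMap.comp_apply, conv_apply', h1, ← r.eq, map_sum, TensorProduct.map_tmul,
    LinearMap.mul'_apply]

lemma convOne_comp {C' : Type} [AddCommGroup C'] [Module k C'] [Coalgebra k C']
    (φ : C' →ₗ[k] C)
    (hε : Coalgebra.counit ∘ₗ φ = (Coalgebra.counit : C' →ₗ[k] k)) :
    (convOne k : C →ₗ[k] A) ∘ₗ φ = convOne k := by
  ext x
  have h1 : Coalgebra.counit (R := k) (φ x) = Coalgebra.counit (R := k) x :=
    congrFun (congrArg DFunLike.coe hε) x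
  simp only [LinearMap.comp_apply, convOne_apply', h1]

end RingA

section CommA

variable {A : Type} [CommRing A] [Algebra k A]

lemma conv_smul_left (c : A) (f g : C →ₗ[k] A) :
    conv k (c • f) g = c • conv k f g := by
  ext x
  have r := Coalgebra.Repr.arbitrary k x
  simp only [conv_apply', ← r.eq, map_sum, TensorProduct.map_tmul, LinearMap.mul'_apply,
    LinearMap.smul_apply, smul_eq_mul]
  rw [Finset.mul_sum]
  exact Finset.sum_congr rfl fun i _ => by ring

lemma conv_smul_right (c : A) (f g : C →ₗ[k] A) :
    conv k f (c • g) = c • conv k f g := by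
  ext x
  have r := Coalgebra.Repr.arbitrary k x
  simp only [conv_apply', ← r.eq, map_sum, TensorProduct.map_tmul, LinearMap.mul'_apply,
    LinearMap.smul_apply, smul_eq_mul]
  rw [Finset.mul_sum]
  exact Finset.sum_congr rfl fun i _ => by ring

end CommA

section HopfAux

variable {H : Type} [Ring H] [HopfAlgebra k H]

/-- Multiplication of `H` is a coalgebra map. -/
lemma comul_comp_mul'H :
    Coalgebra.comul ∘ₗ LinearMap.mul' k H
      = TensorProduct.map (LinearMap.mul' k H) (LinearMap.mul' k H) ∘ₗ
          (Coalgebra.comul (R := k) (A := H ⊗[k] H)) := by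
  apply TensorProduct.ext'
  intro a b
  have key : ∀ (u v : H ⊗[k] H),
      TensorProduct.map (LinearMap.mul' k H) (LinearMap.mul' k H)
        (TensorProduct.tensorTensorTensorComm k H H H H (u ⊗ₜ[k] v)) = u * v := by
    intro u v
    induction u using TensorProduct.induction_on with
    | zero => simp
    | add u₁ u₂ h1 h2 => simp_all [TensorProduct.add_tmul, add_mul]
    | tmul a₁ a₂ =>
      induction v using TensorProduct.induction_on with
      | zero => simp
      | add v₁ v₂ h1 h2 => simp_all [TensorProduct.tmul_add, mul_add]
      | tmul b₁ b₂ =>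
        simp [TensorProduct.tensorTensorTensorComm_tmul,
          Algebra.TensorProduct.tmul_mul_tmul]
  simp only [LinearMap.comp_apply, LinearMap.mul'_apply, Bialgebra.comul_mul,
    TensorProduct.comul_def, TensorProduct.AlgebraTensorModule.map_eq,
      TensorProduct.AlgebraTensorModule.tensorTensorTensorComm_eq, TensorProduct.map_tmul, LinearEquiv.coe_coe]
  exact (key (Coalgebra.comul a) (Coalgebra.comul b)).symm

lemma counit_comp_mul'H :
    Coalgebra.counit ∘ₗ LinearMap.mul' k H
      = (Coalgebra.counit : H ⊗[k] H →ₗ[k] k) := by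
  apply TensorProduct.ext'
  intro a b
  simp [LinearMap.mul'_apply, Bialgebra.counit_mul, TensorProduct.counit_def,
    TensorProduct.AlgebraTensorModule.map_eq, TensorProduct.AlgebraTensorModule.rid_eq_rid, mul_comm]

lemma conv_antipode_id :
    conv k (HopfAlgebra.antipode (R := k) (A := H)) LinearMap.id = convOne k := by
  ext x
  rw [conv_apply']
  have h1 : TensorProduct.map (HopfAlgebra.antipode (R := k)) (LinearMap.id)
        (Coalgebra.comul x)
      = LinearMap.rTensor H (HopfAlgebra.antipode (R := k)) (Coalgebra.comul x) := rfl
  rw [h1, HopfAlgebra.mul_antipode_rTensor_comul_apply]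
  rfl

lemma conv_id_antipode :
    conv k LinearMap.id (HopfAlgebra.antipode (R := k) (A := H)) = convOne k := by
  ext x
  rw [conv_apply']
  have h1 : TensorProduct.map (LinearMap.id) (HopfAlgebra.antipode (R := k))
        (Coalgebra.comul x)
      = LinearMap.lTensor H (HopfAlgebra.antipode (R := k)) (Coalgebra.comul x) := rfl
  rw [h1, HopfAlgebra.mul_antipode_lTensor_comul_apply]
  rfl

lemma counit_comp_antipode :
    (Coalgebra.counit : H →ₗ[k] k) ∘ₗ HopfAlgebra.antipode (R := k) = Coalgebra.counit := by
  have h0 : (convOne k : H →ₗ[k] k) = Coalgebra.counit := by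
    ext x; simp [convOne_apply']
  have h1 := algHom_comp_conv (Bialgebra.counitAlgHom k H)
      (HopfAlgebra.antipode (R := k)) LinearMap.id
  rw [conv_antipode_id] at h1
  have h2 : (Bialgebra.counitAlgHom k H).toLinearMap ∘ₗ (convOne k : H →ₗ[k] H)
      = convOne k := by
    ext x; simp [convOne_apply']
  rw [h2] at h1
  have h3 : (Bialgebra.counitAlgHom k H).toLinearMap = (Coalgebra.counit : H →ₗ[k] k) := rfl
  rw [h3, LinearMap.comp_id] at h1
  calc (Coalgebra.counit : H →ₗ[k] k) ∘ₗ HopfAlgebra.antipode (R := k)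
      = conv k ((Coalgebra.counit : H →ₗ[k] k) ∘ₗ HopfAlgebra.antipode (R := k))
          (convOne k) := (conv_convOne _).symm
    _ = conv k ((Coalgebra.counit : H →ₗ[k] k) ∘ₗ HopfAlgebra.antipode (R := k))
          (Coalgebra.counit) := by rw [h0]
    _ = convOne k := h1
    _ = Coalgebra.counit := h0

lemma conv_incl :
    conv k (Algebra.TensorProduct.includeLeft (R := k) (S := k) (A := H) (B := H)).toLinearMap
        (Algebra.TensorProduct.includeRight (R := k) (A := H) (B := H)).toLinearMap
      = (Coalgebra.comul : H →ₗ[k] H ⊗[k] H) := by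
  have hm : LinearMap.mul' k (H ⊗[k] H) ∘ₗ TensorProduct.map
        (Algebra.TensorProduct.includeLeft (R := k) (S := k) (A := H) (B := H)).toLinearMap
        (Algebra.TensorProduct.includeRight (R := k) (A := H) (B := H)).toLinearMap
      = LinearMap.id := by
    apply TensorProduct.ext'
    intro a b
    simp [LinearMap.mul'_apply, Algebra.TensorProduct.tmul_mul_tmul]
  have hdef : conv k
        (Algebra.TensorProduct.includeLeft (R := k) (S := k) (A := H) (B := H)).toLinearMap
        (Algebra.TensorProduct.includeRight (R := k) (A := H) (B := H)).toLinearMap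
      = LinearMap.mul' k (H ⊗[k] H) ∘ₗ TensorProduct.map
          (Algebra.TensorProduct.includeLeft (R := k) (S := k) (A := H) (B := H)).toLinearMap
          (Algebra.TensorProduct.includeRight (R := k) (A := H) (B := H)).toLinearMap
            ∘ₗ Coalgebra.comul := rfl
  rw [hdef, ← LinearMap.comp_assoc, hm, LinearMap.id_comp]

lemma conv_incl_antipode :
    conv k ((Algebra.TensorProduct.includeRight (R := k) (A := H) (B := H)).toLinearMap
          ∘ₗ HopfAlgebra.antipode (R := k))
        ((Algebra.TensorProduct.includeLeft (R := k) (S := k) (A := H) (B := H)).toLinearMap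
          ∘ₗ HopfAlgebra.antipode (R := k))
      = (TensorProduct.comm k H H).toLinearMap ∘ₗ
          TensorProduct.map (HopfAlgebra.antipode (R := k)) (HopfAlgebra.antipode (R := k))
            ∘ₗ Coalgebra.comul := by
  have hm : LinearMap.mul' k (H ⊗[k] H) ∘ₗ TensorProduct.map
        (Algebra.TensorProduct.includeRight (R := k) (A := H) (B := H)).toLinearMap
        (Algebra.TensorProduct.includeLeft (R := k) (S := k) (A := H) (B := H)).toLinearMap
      = (TensorProduct.comm k H H).toLinearMap := by
    apply TensorProduct.ext'
    intro a b
    simp [LinearMap.mul'_apply, Algebra.TensorProduct.tmul_mul_tmul]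
  have hdef : conv k
        ((Algebra.TensorProduct.includeRight (R := k) (A := H) (B := H)).toLinearMap
          ∘ₗ HopfAlgebra.antipode (R := k))
        ((Algebra.TensorProduct.includeLeft (R := k) (S := k) (A := H) (B := H)).toLinearMap
          ∘ₗ HopfAlgebra.antipode (R := k))
      = LinearMap.mul' k (H ⊗[k] H) ∘ₗ TensorProduct.map
          ((Algebra.TensorProduct.includeRight (R := k) (A := H) (B := H)).toLinearMap
            ∘ₗ HopfAlgebra.antipode (R := k))
          ((Algebra.TensorProduct.includeLeft (R := k) (S := k) (A := H) (B := H)).toLinearMap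
            ∘ₗ HopfAlgebra.antipode (R := k)) ∘ₗ Coalgebra.comul := rfl
  rw [hdef, TensorProduct.map_comp, ← LinearMap.comp_assoc, ← LinearMap.comp_assoc, hm,
    LinearMap.comp_assoc]

lemma comul_comp_antipode :
    Coalgebra.comul ∘ₗ (HopfAlgebra.antipode (R := k) (A := H))
      = (TensorProduct.comm k H H).toLinearMap ∘ₗ
          TensorProduct.map (HopfAlgebra.antipode (R := k)) (HopfAlgebra.antipode (R := k))
            ∘ₗ Coalgebra.comul := by
  have hA : conv k (Coalgebra.comul ∘ₗ HopfAlgebra.antipode (R := k))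
      (Coalgebra.comul (R := k) (A := H)) = convOne k := by
    have h1 := algHom_comp_conv (Bialgebra.comulAlgHom k H)
      (HopfAlgebra.antipode (R := k)) LinearMap.id
    rw [conv_antipode_id] at h1
    have h2 : (Bialgebra.comulAlgHom k H).toLinearMap ∘ₗ (convOne k : H →ₗ[k] H)
        = convOne k := by
      ext x; simp [convOne_apply']
    rw [h2] at h1
    have h3 : (Bialgebra.comulAlgHom k H).toLinearMap
        = (Coalgebra.comul : H →ₗ[k] H ⊗[k] H) := rfl
    rw [h3, LinearMap.comp_id] at h1
    exact h1
  have hB : conv k (Coalgebra.comul (R := k) (A := H))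
      ((TensorProduct.comm k H H).toLinearMap ∘ₗ
        TensorProduct.map (HopfAlgebra.antipode (R := k)) (HopfAlgebra.antipode (R := k))
          ∘ₗ Coalgebra.comul) = convOne k := by
    rw [← conv_incl_antipode, ← conv_incl, conv_assoc,
      ← conv_assoc (Algebra.TensorProduct.includeRight (R := k) (A := H) (B := H)).toLinearMap]
    have h3 : conv k
        (Algebra.TensorProduct.includeRight (R := k) (A := H) (B := H)).toLinearMap
        ((Algebra.TensorProduct.includeRight (R := k) (A := H) (B := H)).toLinearMap
          ∘ₗ HopfAlgebra.antipode (R := k)) = convOne k := by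
      have h4 := algHom_comp_conv (Algebra.TensorProduct.includeRight (R := k) (A := H) (B := H))
        LinearMap.id (HopfAlgebra.antipode (R := k))
      rw [conv_id_antipode] at h4
      have h5 : (Algebra.TensorProduct.includeRight (R := k) (A := H) (B := H)).toLinearMap
          ∘ₗ (convOne k : H →ₗ[k] H) = convOne k := by
        ext x; simp [convOne_apply']
        rw [Algebra.algebraMap_eq_smul_one, ← TensorProduct.smul_tmul]
      rw [h5, LinearMap.comp_id] at h4
      exact h4
    rw [h3, convOne_conv]
    have h6 := algHom_comp_conv
      (Algebra.TensorProduct.includeLeft (R := k) (S := k) (A := H) (B := H))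
      LinearMap.id (HopfAlgebra.antipode (R := k))
    rw [conv_id_antipode] at h6
    have h7 : (Algebra.TensorProduct.includeLeft (R := k) (S := k) (A := H) (B := H)).toLinearMap
        ∘ₗ (convOne k : H →ₗ[k] H) = convOne k := by
      ext x; simp [convOne_apply']
    rw [h7, LinearMap.comp_id] at h6
    exact h6
  calc Coalgebra.comul ∘ₗ (HopfAlgebra.antipode (R := k) (A := H))
      = conv k (Coalgebra.comul ∘ₗ HopfAlgebra.antipode (R := k)) (convOne k) :=
        (conv_convOne _).symm
    _ = conv k (Coalgebra.comul ∘ₗ HopfAlgebra.antipode (R := k))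
          (conv k (Coalgebra.comul (R := k) (A := H))
            ((TensorProduct.comm k H H).toLinearMap ∘ₗ
              TensorProduct.map (HopfAlgebra.antipode (R := k))
                (HopfAlgebra.antipode (R := k)) ∘ₗ Coalgebra.comul)) := by rw [hB]
    _ = conv k (conv k (Coalgebra.comul ∘ₗ HopfAlgebra.antipode (R := k))
          (Coalgebra.comul (R := k) (A := H)))
          ((TensorProduct.comm k H H).toLinearMap ∘ₗ
            TensorProduct.map (HopfAlgebra.antipode (R := k))
              (HopfAlgebra.antipode (R := k)) ∘ₗ Coalgebra.comul) := (conv_assoc _ _ _).symm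
    _ = conv k (convOne k)
          ((TensorProduct.comm k H H).toLinearMap ∘ₗ
            TensorProduct.map (HopfAlgebra.antipode (R := k))
              (HopfAlgebra.antipode (R := k)) ∘ₗ Coalgebra.comul) := by rw [hA]
    _ = _ := convOne_conv _

lemma conv_comp_antipode {A : Type} [CommRing A] [Algebra k A] (f g : H →ₗ[k] A) :
    conv k (f ∘ₗ HopfAlgebra.antipode (R := k)) (g ∘ₗ HopfAlgebra.antipode (R := k))
      = conv k g f ∘ₗ HopfAlgebra.antipode (R := k) := by
  ext x
  have hz : ∀ z : H ⊗[k] H, LinearMap.mul' k A (TensorProduct.map f g z)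
      = LinearMap.mul' k A (TensorProduct.map g f (TensorProduct.comm k H H z)) := by
    intro z
    induction z using TensorProduct.induction_on with
    | zero => simp
    | add z₁ z₂ h1 h2 => simp_all
    | tmul a b => simp [LinearMap.mul'_apply, mul_comm]
  have hS : Coalgebra.comul (R := k) (HopfAlgebra.antipode (R := k) x)
      = TensorProduct.comm k H H
          (TensorProduct.map (HopfAlgebra.antipode (R := k)) (HopfAlgebra.antipode (R := k))
            (Coalgebra.comul x)) :=
    congrFun (congrArg DFunLike.coe comul_comp_antipode) x
  have hmap : TensorProduct.map (f ∘ₗ HopfAlgebra.antipode (R := k))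
        (g ∘ₗ HopfAlgebra.antipode (R := k)) (Coalgebra.comul x)
      = TensorProduct.map f g
          (TensorProduct.map (HopfAlgebra.antipode (R := k)) (HopfAlgebra.antipode (R := k))
            (Coalgebra.comul x)) := by
    rw [TensorProduct.map_comp]; rfl
  simp only [LinearMap.comp_apply, conv_apply', hmap, hz, hS]

end HopfAux

section TakAux

variable {H : Type} [Ring H] [HopfAlgebra k H]
variable {T : Type} [CommRing T] [HopfAlgebra k T] (D : TakData k H T)

lemma conv_tinvMul_tMul : conv k D.tinvMul D.tMul = convOne k := by
  have h := conv_coalgMap_comp (LinearMap.mul' k H) comul_comp_mul'H D.tinv D.t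
  rw [D.conv_tinv_t, convOne_comp _ counit_comp_mul'H] at h
  rw [TakData.tinvMul, TakData.tMul]
  exact h

lemma conv_sigmaEps_tMul : conv k D.sigmaEps D.tMul = D.tt := by
  rw [TakData.sigmaEps, conv_assoc, conv_tinvMul_tMul, conv_convOne]

lemma t_one_mul_tinv_one : D.t 1 * D.tinv 1 = 1 := by
  have h := congrFun (congrArg DFunLike.coe D.conv_t_tinv) (1 : H)
  rw [conv_apply', convOne_apply'] at h
  rw [Bialgebra.comul_one, Algebra.TensorProduct.one_def] at h
  simpa using h

lemma sigmaEpsInv_one : D.sigmaEpsInv ((1 : H) ⊗ₜ[k] (1 : H)) = D.tinv 1 := by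
  rw [TakData.sigmaEpsInv, conv_apply']
  have hΔ : (Coalgebra.comul (R := k) ((1 : H) ⊗ₜ[k] (1 : H)))
      = ((1 : H) ⊗ₜ[k] (1 : H)) ⊗ₜ[k] ((1 : H) ⊗ₜ[k] (1 : H)) := by
    simp [TensorProduct.comul_def, TensorProduct.AlgebraTensorModule.map_eq,
      TensorProduct.AlgebraTensorModule.tensorTensorTensorComm_eq, Bialgebra.comul_one,
      Algebra.TensorProduct.one_def]
  rw [hΔ]
  simp only [TensorProduct.map_tmul, LinearMap.mul'_apply, TakData.tMul, TakData.tinvtinv,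
    LinearMap.comp_apply]
  rw [mul_one, ← mul_assoc, t_one_mul_tinv_one, one_mul]

/-- `a ⊗ (b ⊗ c) ↦ t (S a * b) * t⁻¹ c`. -/
noncomputable def omegaMap : H ⊗[k] (H ⊗[k] H) →ₗ[k] T :=
  LinearMap.mul' k T ∘ₗ TensorProduct.map
    (D.t ∘ₗ LinearMap.mul' k H ∘ₗ LinearMap.rTensor H (HopfAlgebra.antipode (R := k)))
    D.tinv ∘ₗ (TensorProduct.assoc k H H H).symm.toLinearMap

lemma omegaMap_tmul (a b c : H) :
    omegaMap D (a ⊗ₜ[k] (b ⊗ₜ[k] c))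
      = D.t (HopfAlgebra.antipode (R := k) a * b) * D.tinv c := by
  simp [omegaMap, LinearMap.mul'_apply]

lemma omegaMap_assoc (z : H ⊗[k] H) (d : H) :
    omegaMap D ((TensorProduct.assoc k H H H) (z ⊗ₜ[k] d))
      = D.t (LinearMap.mul' k H (LinearMap.rTensor H (HopfAlgebra.antipode (R := k)) z))
          * D.tinv d := by
  induction z using TensorProduct.induction_on with
  | zero => simp
  | add z₁ z₂ h1 h2 => simp_all [TensorProduct.add_tmul, add_mul]
  | tmul p q => simp [omegaMap_tmul, LinearMap.mul'_apply]

lemma omega_comul (y : H) :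
    omegaMap D (LinearMap.lTensor H (Coalgebra.comul (R := k)) (Coalgebra.comul y))
      = D.t 1 * D.tinv y := by
  rw [← Coalgebra.coassoc_apply y]
  have r := Coalgebra.Repr.arbitrary k y
  have hy : ∑ i ∈ r.index, Coalgebra.counit (R := k) (r.left i) • r.right i = y := by
    have := congrArg (TensorProduct.lid k H) (Coalgebra.sum_counit_tmul_eq r)
    simp only [map_sum, TensorProduct.lid_tmul, one_smul] at this
    exact this
  rw [← r.eq]
  simp only [map_sum, LinearMap.rTensor_tmul]
  calc ∑ i ∈ r.index,
        omegaMap D ((TensorProduct.assoc k H H H)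
          (LinearMap.rTensor H (Coalgebra.comul (R := k)) (r.left i ⊗ₜ[k] r.right i)))
      = ∑ i ∈ r.index, D.t 1 * D.tinv (Coalgebra.counit (R := k) (r.left i) • r.right i) := by
        refine Finset.sum_congr rfl fun i _ => ?_
        rw [LinearMap.rTensor_tmul, omegaMap_assoc,
          HopfAlgebra.mul_antipode_rTensor_comul_apply]
        rw [Algebra.algebraMap_eq_smul_one, map_smul, map_smul, smul_mul_assoc,
          mul_smul_comm]
    _ = D.t 1 * D.tinv y := by
        rw [← Finset.mul_sum, ← map_sum, hy]

lemma sigmaEpsInv_antipode_left (w : H ⊗[k] H) :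
    D.sigmaEpsInv (LinearMap.rTensor H (HopfAlgebra.antipode (R := k)) w)
      = LinearMap.mul' k T
          (TensorProduct.map (D.tinv ∘ₗ HopfAlgebra.antipode (R := k))
            (omegaMap D ∘ₗ LinearMap.lTensor H (Coalgebra.comul (R := k)))
            ((TensorProduct.assoc k H H H)
              (LinearMap.rTensor H (Coalgebra.comul (R := k)) w))) := by
  induction w using TensorProduct.induction_on with
  | zero => simp
  | add w₁ w₂ h1 h2 => simp_all
  | tmul A B =>
    rw [LinearMap.rTensor_tmul, LinearMap.rTensor_tmul]
    -- LHS
    rw [TakData.sigmaEpsInv, conv_apply']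
    have hΔ2 : (Coalgebra.comul (R := k) ((HopfAlgebra.antipode (R := k) A) ⊗ₜ[k] B))
        = TensorProduct.tensorTensorTensorComm k H H H H
            ((TensorProduct.comm k H H)
              (TensorProduct.map (HopfAlgebra.antipode (R := k))
                (HopfAlgebra.antipode (R := k)) (Coalgebra.comul A)) ⊗ₜ[k]
              Coalgebra.comul B) := by
      have hSA : Coalgebra.comul (R := k) (HopfAlgebra.antipode (R := k) A)
          = (TensorProduct.comm k H H)
              (TensorProduct.map (HopfAlgebra.antipode (R := k))
                (HopfAlgebra.antipode (R := k)) (Coalgebra.comul A)) :=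
        congrFun (congrArg DFunLike.coe comul_comp_antipode) A
      simp only [TensorProduct.comul_def, TensorProduct.AlgebraTensorModule.map_eq,
      TensorProduct.AlgebraTensorModule.tensorTensorTensorComm_eq, LinearMap.comp_apply,
        TensorProduct.map_tmul, LinearEquiv.coe_coe, hSA]
    rw [hΔ2]
    -- reduce to a statement about u := comul A, v := comul B
    have step1 : ∀ u : H ⊗[k] H,
        LinearMap.mul' k T
          (TensorProduct.map (D.tinv ∘ₗ HopfAlgebra.antipode (R := k))
            (omegaMap D ∘ₗ LinearMap.lTensor H (Coalgebra.comul (R := k)))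
            ((TensorProduct.assoc k H H H) (u ⊗ₜ[k] B)))
        = LinearMap.mul' k T
            (TensorProduct.map (D.tinv ∘ₗ HopfAlgebra.antipode (R := k)) (omegaMap D)
              ((TensorProduct.assoc k H H (H ⊗[k] H))
                (u ⊗ₜ[k] (Coalgebra.comul (R := k) B)))) := by
      intro u
      induction u using TensorProduct.induction_on with
      | zero => simp
      | add u₁ u₂ h1 h2 => simp_all [TensorProduct.add_tmul]
      | tmul p q => simp
    rw [step1]
    -- now fully bilinear in u and v
    have claim2 : ∀ (u v : H ⊗[k] H),
        LinearMap.mul' k T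
          (TensorProduct.map D.tMul D.tinvtinv
            (TensorProduct.tensorTensorTensorComm k H H H H
              ((TensorProduct.comm k H H)
                (TensorProduct.map (HopfAlgebra.antipode (R := k))
                  (HopfAlgebra.antipode (R := k)) u) ⊗ₜ[k] v)))
        = LinearMap.mul' k T
            (TensorProduct.map (D.tinv ∘ₗ HopfAlgebra.antipode (R := k)) (omegaMap D)
              ((TensorProduct.assoc k H H (H ⊗[k] H)) (u ⊗ₜ[k] v))) := by
      intro u v
      induction u using TensorProduct.induction_on with
      | zero => simp
      | add u₁ u₂ h1 h2 => simp_all [TensorProduct.add_tmul]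
      | tmul P Q =>
        induction v using TensorProduct.induction_on with
        | zero => simp
        | add v₁ v₂ h1 h2 => simp_all [TensorProduct.tmul_add]
        | tmul Cc Dd =>
          simp only [TensorProduct.map_tmul, TensorProduct.comm_tmul,
            TensorProduct.tensorTensorTensorComm_tmul, TensorProduct.assoc_tmul,
            LinearMap.mul'_apply, LinearMap.comp_apply, omegaMap_tmul,
            TakData.tMul, TakData.tinvtinv]
          ring
    exact claim2 (Coalgebra.comul A) (Coalgebra.comul B)

lemma gmap_eq :
    D.sigmaEpsInv ∘ₗ LinearMap.rTensor H (HopfAlgebra.antipode (R := k)) ∘ₗ Coalgebra.comul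
      = D.t 1 • conv k (D.tinv ∘ₗ HopfAlgebra.antipode (R := k)) D.tinv := by
  ext x
  simp only [LinearMap.comp_apply]
  rw [sigmaEpsInv_antipode_left, Coalgebra.coassoc_apply]
  have r := Coalgebra.Repr.arbitrary k x
  rw [← r.eq]
  simp only [map_sum, LinearMap.lTensor_tmul, TensorProduct.map_tmul, LinearMap.mul'_apply,
    LinearMap.comp_apply]
  have hR : (D.t 1 • conv k (D.tinv ∘ₗ HopfAlgebra.antipode (R := k)) D.tinv) x
      = ∑ i ∈ r.index, D.tinv (HopfAlgebra.antipode (R := k) (r.left i))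
          * (D.t 1 * D.tinv (r.right i)) := by
    rw [LinearMap.smul_apply, conv_apply', ← r.eq]
    simp only [map_sum, TensorProduct.map_tmul, LinearMap.mul'_apply, LinearMap.comp_apply,
      smul_eq_mul, Finset.mul_sum]
    exact Finset.sum_congr rfl fun i _ => by ring
  rw [hR]
  exact Finset.sum_congr rfl fun i _ => by rw [omega_comul]

lemma conv_tS_gmap :
    conv k (D.t ∘ₗ HopfAlgebra.antipode (R := k))
        (D.sigmaEpsInv ∘ₗ LinearMap.rTensor H (HopfAlgebra.antipode (R := k))
          ∘ₗ Coalgebra.comul)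
      = D.t 1 • D.tinv := by
  rw [gmap_eq, conv_smul_right, ← conv_assoc, conv_comp_antipode, D.conv_tinv_t,
    convOne_comp _ counit_comp_antipode, convOne_conv]

lemma sigmaEps_mem (u : H ⊗[k] H) : D.sigmaEps u ∈ D.B := by
  induction u using TensorProduct.induction_on with
  | zero => rw [map_zero]; exact zero_mem _
  | add u v hu hv => rw [map_add]; exact add_mem hu hv
  | tmul a b => exact Algebra.subset_adjoin (Set.mem_union_left _ ⟨(a, b), rfl⟩)

lemma sigmaEpsInv_mem (u : H ⊗[k] H) : D.sigmaEpsInv u ∈ D.B := by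
  induction u using TensorProduct.induction_on with
  | zero => rw [map_zero]; exact zero_mem _
  | add u v hu hv => rw [map_add]; exact add_mem hu hv
  | tmul a b => exact Algebra.subset_adjoin (Set.mem_union_right _ ⟨(a, b), rfl⟩)

end TakAux

end ConvAux

/-- `S(t_H)_Θ` is generated as a `B_H`-module by the elements `t_x`;
in particular every product `t_x t_y` and every `t⁻¹_x` lies in the `B_H`-submodule
spanned by the `t_z`. -/
theorem span_t_eq_top
    {H : Type} [Ring H] [HopfAlgebra k H]
    {T : Type} [CommRing T] [HopfAlgebra k T] (D : TakData k H T) :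
    Submodule.span (↥D.B) (Set.range ⇑D.t) = (⊤ : Submodule (↥D.B) T) ∧
    (∀ x y : H, D.t x * D.t y ∈ Submodule.span (↥D.B) (Set.range ⇑D.t)) ∧
    (∀ x : H, D.tinv x ∈ Submodule.span (↥D.B) (Set.range ⇑D.t)) := by
  classical
  set M := Submodule.span (↥D.B) (Set.range ⇑D.t) with hMdef
  have ht : ∀ z : H, D.t z ∈ M := fun z => Submodule.subset_span ⟨z, rfl⟩
  have hBsmul : ∀ b : T, b ∈ D.B → ∀ m : T, m ∈ M → b * m ∈ M := by
    intro b hb m hm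
    have h1 : (⟨b, hb⟩ : ↥D.B) • m ∈ M := Submodule.smul_mem _ _ hm
    simpa [Subalgebra.smul_def, smul_eq_mul] using h1
  have claim2 : ∀ x y : H, D.t x * D.t y ∈ M := by
    intro x y
    have h1 : D.t x * D.t y = conv k D.sigmaEps D.tMul (x ⊗ₜ[k] y) := by
      rw [conv_sigmaEps_tMul]
      simp [TakData.tt, LinearMap.mul'_apply]
    rw [h1, conv_apply']
    generalize (Coalgebra.comul (R := k) (x ⊗ₜ[k] y)) = w
    induction w using TensorProduct.induction_on with
    | zero => simpa using Submodule.zero_mem M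
    | add u v hu hv => rw [map_add, map_add]; exact Submodule.add_mem M hu hv
    | tmul u v =>
      rw [TensorProduct.map_tmul, LinearMap.mul'_apply]
      have h2 : D.tMul v = D.t (LinearMap.mul' k H v) := rfl
      rw [h2]
      exact hBsmul _ (sigmaEps_mem D u) _ (ht _)
  have claim3 : ∀ x : H, D.tinv x ∈ M := by
    intro x
    have h1 : D.t 1 * D.tinv x ∈ M := by
      have h2 := congrFun (congrArg DFunLike.coe (conv_tS_gmap D)) x
      have h3 : (D.t 1 • D.tinv) x = D.t 1 * D.tinv x := by
        rw [LinearMap.smul_apply, smul_eq_mul]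
      rw [h3] at h2
      rw [← h2, conv_apply']
      generalize (Coalgebra.comul (R := k) x) = w
      induction w using TensorProduct.induction_on with
      | zero => simpa using Submodule.zero_mem M
      | add u v hu hv => rw [map_add, map_add]; exact Submodule.add_mem M hu hv
      | tmul a b =>
        rw [TensorProduct.map_tmul, LinearMap.mul'_apply, mul_comm]
        exact hBsmul _ (sigmaEpsInv_mem D _) _ (ht _)
    have h4 : D.tinv x = D.sigmaEpsInv ((1:H) ⊗ₜ[k] (1:H)) * (D.t 1 * D.tinv x) := by
      rw [sigmaEpsInv_one, ← mul_assoc, mul_comm (D.tinv 1) (D.t 1), t_one_mul_tinv_one,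
        one_mul]
    rw [h4]
    exact hBsmul _ (sigmaEpsInv_mem D _) _ h1
  have hone : (1 : T) ∈ M := by
    have h5 : (1 : T) = D.sigmaEpsInv ((1:H) ⊗ₜ[k] (1:H)) * D.t 1 := by
      rw [sigmaEpsInv_one, mul_comm, t_one_mul_tinv_one]
    rw [h5]
    exact hBsmul _ (sigmaEpsInv_mem D _) _ (ht 1)
  have hmul : ∀ a : T, a ∈ M → ∀ b : T, b ∈ M → a * b ∈ M := by
    intro a ha
    refine Submodule.span_induction (p := fun x _ => ∀ b : T, b ∈ M → x * b ∈ M)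
      ?_ ?_ ?_ ?_ ha
    · rintro t0 ⟨z, rfl⟩ b hb
      refine Submodule.span_induction (p := fun y _ => D.t z * y ∈ M) ?_ ?_ ?_ ?_ hb
      · rintro t1 ⟨w, rfl⟩
        exact claim2 z w
      · show D.t z * 0 ∈ M
        rw [mul_zero]; exact Submodule.zero_mem M
      · intro u v hu hv pu pv
        show D.t z * (u + v) ∈ M
        rw [mul_add]; exact Submodule.add_mem M pu pv
      · intro c u hu pu
        show D.t z * (c • u) ∈ M
        rw [Subalgebra.smul_def, smul_eq_mul, ← mul_assoc, mul_comm (D.t z) (c : T),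
          mul_assoc]
        exact hBsmul _ c.2 _ pu
    · intro b hb
      show (0 : T) * b ∈ M
      rw [zero_mul]; exact Submodule.zero_mem M
    · intro u v hu hv pu pv b hb
      show (u + v) * b ∈ M
      rw [add_mul]
      exact Submodule.add_mem M (pu b hb) (pv b hb)
    · intro c u hu pu b hb
      show (c • u) * b ∈ M
      rw [Subalgebra.smul_def, smul_eq_mul, mul_assoc]
      exact hBsmul _ c.2 _ (pu b hb)
  have htop : M = ⊤ := by
    rw [Submodule.eq_top_iff']
    intro z
    have hz : z ∈ Algebra.adjoin k (Set.range ⇑D.t ∪ Set.range ⇑D.tinv) := by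
      rw [D.adjoin_eq_top]; exact Algebra.mem_top
    refine Algebra.adjoin_induction (p := fun x _ => x ∈ M) ?_ ?_ ?_ ?_ hz
    · rintro w (⟨z', rfl⟩ | ⟨z', rfl⟩)
      · exact ht z'
      · exact claim3 z'
    · intro r
      have h6 : algebraMap k T r = algebraMap k T r * 1 := (mul_one _).symm
      rw [h6]
      exact hBsmul _ (Subalgebra.algebraMap_mem D.B r) _ hone
    · intro u v _ _ pu pv; exact Submodule.add_mem M pu pv
    · intro u v _ _ pu pv; exact hmul u pu v pv

  exact ⟨htop, claim2, claim3⟩
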